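/- Let A ∈ ℝⁿˣⁿ be a Metzler matrix with spectral abscissa μ(A) < 0. Then there exists a vector v ≫ 0 (strictly positive componentwise) with Av ≪ 0 (strictly negative componentwise). -/

import Mathlib

namespace Stmt15Aux
open Matrix Set
variable {n : ℕ}
attribute [local instance] Matrix.linftyOpNormedRing Matrix.linftyOpNormedAlgebra

noncomputable local instance : CompleteSpace (Matrix (Fin n) (Fin n) ℝ) :=
  inferInstanceAs (CompleteSpace (Fin n → Fin n → ℝ))

theorem entry_le_norm (M : Matrix (Fin n) (Fin n) ℝ) (i j : Fin n) : ‖M i j‖ ≤ ‖M‖ := by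
  have h1 : ‖M i j‖₊ ≤ ‖M‖₊ := by
    rw [Matrix.linfty_opNNNorm_def]
    exact le_trans (Finset.single_le_sum (f := fun j => ‖M i j‖₊)
      (fun _ _ => zero_le) (Finset.mem_univ j))
      (Finset.le_sup (f := fun i => ∑ j, ‖M i j‖₊) (Finset.mem_univ i))
  exact_mod_cast h1

theorem tendsto_entry {ι : Type*} {l : Filter ι} {F : ι → Matrix (Fin n) (Fin n) ℝ}
    {L : Matrix (Fin n) (Fin n) ℝ} (h : Filter.Tendsto F l (nhds L)) (i j : Fin n) :
    Filter.Tendsto (fun k => F k i j) l (nhds (L i j)) := by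
  exact ((continuous_apply j).tendsto _).comp (((continuous_apply i).tendsto _).comp h)

theorem mul_nonneg' {M N : Matrix (Fin n) (Fin n) ℝ} (hM : ∀ i j, 0 ≤ M i j)
    (hN : ∀ i j, 0 ≤ N i j) : ∀ i j, 0 ≤ (M * N) i j := by
  intro i j
  rw [Matrix.mul_apply]
  exact Finset.sum_nonneg fun k _ => mul_nonneg (hM i k) (hN k j)

theorem pow_nonneg' {M : Matrix (Fin n) (Fin n) ℝ} (hM : ∀ i j, 0 ≤ M i j) (k : ℕ) :
    ∀ i j, 0 ≤ (M ^ k) i j := by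
  induction k with
  | zero => intro i j; simp [Matrix.one_apply]; positivity
  | succ k ih => rw [pow_succ]; exact mul_nonneg' ih hM

theorem hasSum_nonneg {f : ℕ → Matrix (Fin n) (Fin n) ℝ} {S : Matrix (Fin n) (Fin n) ℝ}
    (h : HasSum f S) (hf : ∀ k, ∀ i j, 0 ≤ f k i j) : ∀ i j, 0 ≤ S i j := by
  intro i j
  refine ge_of_tendsto (tendsto_entry h.tendsto_sum_nat i j) ?_
  filter_upwards with N
  rw [Matrix.sum_apply]
  exact Finset.sum_nonneg fun k _ => hf k i j

theorem geom_inv_nonneg {y : Matrix (Fin n) (Fin n) ℝ} (hy : ‖y‖ < 1)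
    (hy0 : ∀ i j, 0 ≤ y i j) : ∀ i j, 0 ≤ Ring.inverse (1 - y) i j :=
  hasSum_nonneg (hasSum_geom_series_inverse y hy) (fun k => pow_nonneg' hy0 k)


theorem ring_inverse_eq' {M : Type*} [MonoidWithZero M] {a b : M} (h1 : a * b = 1)
    (h2 : b * a = 1) : Ring.inverse a = b := by
  rw [show a = ↑(⟨a, b, h1, h2⟩ : Mˣ) from rfl, Ring.inverse_unit]
  rfl

theorem seed_nonneg (P : Matrix (Fin n) (Fin n) ℝ) (hP : ∀ i j, 0 ≤ P i j) (t : ℝ)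
    (ht : ‖P‖ < t) :
    ∀ i j, 0 ≤ Ring.inverse (t • (1 : Matrix (Fin n) (Fin n) ℝ) - P) i j := by
  have ht0 : 0 < t := lt_of_le_of_lt (norm_nonneg P) ht
  set y : Matrix (Fin n) (Fin n) ℝ := t⁻¹ • P with hy
  have hyn : ‖y‖ < 1 := by
    rw [hy, norm_smul, Real.norm_eq_abs, abs_of_pos (inv_pos.mpr ht0),
      inv_mul_lt_iff₀ ht0, mul_one]
    exact ht
  have hy0 : ∀ i j, 0 ≤ y i j := fun i j => by
    rw [hy, Matrix.smul_apply, smul_eq_mul]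
    exact mul_nonneg (inv_pos.mpr ht0).le (hP i j)
  have hu2 : IsUnit ((1 : Matrix (Fin n) (Fin n) ℝ) - y) := isUnit_one_sub_of_norm_lt_one hyn
  have hfact : t • (1 : Matrix (Fin n) (Fin n) ℝ) - P = t • (1 - y) := by
    rw [smul_sub, hy, smul_smul, mul_inv_cancel₀ ht0.ne', one_smul]
  have hinv : Ring.inverse (t • (1 : Matrix (Fin n) (Fin n) ℝ) - P)
      = t⁻¹ • Ring.inverse (1 - y) := by
    refine ring_inverse_eq' ?_ ?_
    · rw [hfact, smul_mul_smul_comm, mul_inv_cancel₀ ht0.ne',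
        Ring.mul_inverse_cancel _ hu2, one_smul]
    · rw [hfact, smul_mul_smul_comm, inv_mul_cancel₀ ht0.ne',
        Ring.inverse_mul_cancel _ hu2, one_smul]
  intro i j
  rw [hinv, Matrix.smul_apply, smul_eq_mul]
  exact mul_nonneg (inv_pos.mpr ht0).le (geom_inv_nonneg hyn hy0 i j)

theorem stepdown (P : Matrix (Fin n) (Fin n) ℝ) {t t' : ℝ} (htt' : t' ≤ t)
    (hu : IsUnit (t • (1 : Matrix (Fin n) (Fin n) ℝ) - P))
    (hft : ∀ i j, 0 ≤ Ring.inverse (t • (1 : Matrix (Fin n) (Fin n) ℝ) - P) i j)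
    (hsmall : (t - t') * ‖Ring.inverse (t • (1 : Matrix (Fin n) (Fin n) ℝ) - P)‖ < 1) :
    ∀ i j, 0 ≤ Ring.inverse (t' • (1 : Matrix (Fin n) (Fin n) ℝ) - P) i j := by
  set a : Matrix (Fin n) (Fin n) ℝ := t • (1 : Matrix (Fin n) (Fin n) ℝ) - P with ha
  set y : Matrix (Fin n) (Fin n) ℝ := (t - t') • Ring.inverse a with hy
  have hyn : ‖y‖ < 1 := by
    rw [hy, norm_smul, Real.norm_eq_abs, abs_of_nonneg (sub_nonneg.mpr htt')]
    exact hsmall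
  have hy0 : ∀ i j, 0 ≤ y i j := fun i j => by
    rw [hy, Matrix.smul_apply, smul_eq_mul]
    exact mul_nonneg (sub_nonneg.mpr htt') (hft i j)
  have hu2 : IsUnit ((1 : Matrix (Fin n) (Fin n) ℝ) - y) := isUnit_one_sub_of_norm_lt_one hyn
  have hfact : t' • (1 : Matrix (Fin n) (Fin n) ℝ) - P = a * (1 - y) := by
    rw [mul_sub, mul_one, hy, mul_smul_comm, Ring.mul_inverse_cancel _ hu, ha, sub_smul]
    abel
  have e1 : (1 - y) * Ring.inverse (1 - y) = 1 := Ring.mul_inverse_cancel _ hu2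
  have e2 : Ring.inverse (1 - y) * (1 - y) = 1 := Ring.inverse_mul_cancel _ hu2
  have e3 : a * Ring.inverse a = 1 := Ring.mul_inverse_cancel _ hu
  have e4 : Ring.inverse a * a = 1 := Ring.inverse_mul_cancel _ hu
  have hinv : Ring.inverse (t' • (1 : Matrix (Fin n) (Fin n) ℝ) - P)
      = Ring.inverse (1 - y) * Ring.inverse a := by
    refine ring_inverse_eq' ?_ ?_
    · rw [hfact, mul_assoc, ← mul_assoc (1 - y), e1, one_mul, e3]
    · rw [hfact, mul_assoc, ← mul_assoc (Ring.inverse a), e4, one_mul, e2]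
  intro i j
  rw [hinv]
  exact mul_nonneg' (geom_inv_nonneg hyn hy0) (fun i j => hft i j) i j

theorem resolvent_nonneg (P : Matrix (Fin n) (Fin n) ℝ) (hP : ∀ i j, 0 ≤ P i j)
    {s : ℝ} (hs : 0 < s)
    (hunit : ∀ t : ℝ, s ≤ t → IsUnit (t • (1 : Matrix (Fin n) (Fin n) ℝ) - P)) :
    ∀ i j, 0 ≤ Ring.inverse (s • (1 : Matrix (Fin n) (Fin n) ℝ) - P) i j := by
  set f : ℝ → Matrix (Fin n) (Fin n) ℝ := fun t => Ring.inverse (t • 1 - P) with hfdef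
  set T : ℝ := ‖P‖ + s with hT
  have hsT : s ≤ T := by have := norm_nonneg P; rw [hT]; linarith
  have hPT : ‖P‖ < T := by rw [hT]; linarith
  -- continuity of f on [s, T]
  have hcont : ContinuousOn f (Icc s T) := by
    intro t ht
    refine ContinuousAt.continuousWithinAt ?_
    have hu := hunit t ht.1
    have h1 : Continuous (fun t : ℝ => t • (1 : Matrix (Fin n) (Fin n) ℝ) - P) := by
      continuity
    have h2 : ContinuousAt Ring.inverse (t • (1 : Matrix (Fin n) (Fin n) ℝ) - P) := by
      rw [← hu.unit_spec]
      exact NormedRing.inverse_continuousAt hu.unit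
    exact ContinuousAt.comp (x := t) h2 h1.continuousAt
  -- bound for ‖f‖ on [s, T]
  obtain ⟨C₀, hC₀⟩ : ∃ C, ∀ t ∈ Icc s T, ‖f t‖ ≤ C :=
    isCompact_Icc.exists_bound_of_continuousOn hcont
  set C : ℝ := max C₀ 0 with hC
  have hC0 : 0 ≤ C := le_max_right _ _
  have hCb : ∀ t ∈ Icc s T, ‖f t‖ ≤ C := fun t ht => (hC₀ t ht).trans (le_max_left _ _)
  set δ : ℝ := (2 * (C + 1))⁻¹ with hδ
  have hδ0 : 0 < δ := by positivity
  have hδC : δ * C < 1 := by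
    rw [hδ]
    rw [inv_mul_lt_one₀] <;> nlinarith
  set E : Set ℝ := {t | t ∈ Icc s T ∧ ∀ r ∈ Icc t T, ∀ i j, 0 ≤ f r i j} with hE
  have hTE : T ∈ E := by
    refine ⟨⟨hsT, le_refl T⟩, ?_⟩
    intro r hr
    have h : r = T := le_antisymm hr.2 hr.1
    rw [h]
    exact seed_nonneg P hP T hPT
  have hne : E.Nonempty := ⟨T, hTE⟩
  have hbdd : BddBelow E := ⟨s, fun t ht => ht.1.1⟩
  set m : ℝ := sInf E with hm
  have hms : s ≤ m := le_csInf hne fun t ht => ht.1.1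
  have hmT : m ≤ T := csInf_le hbdd hTE
  have hgood_gt : ∀ r, m < r → r ≤ T → ∀ i j, 0 ≤ f r i j := by
    intro r hmr hrT
    obtain ⟨t, htE, htr⟩ := (csInf_lt_iff hbdd hne).mp hmr
    exact htE.2 r ⟨htr.le, hrT⟩
  have hgoodm : ∀ i j, 0 ≤ f m i j := by
    rcases eq_or_lt_of_le hmT with h | h
    · rw [h]; exact hTE.2 T ⟨le_refl T, le_refl T⟩
    · have hc : ContinuousWithinAt f (Ioc m T) m :=
        (hcont m ⟨hms, hmT⟩).mono (fun x hx => ⟨hms.trans hx.1.le, hx.2⟩)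
      haveI : (nhdsWithin m (Ioc m T)).NeBot := by
        rw [nhdsWithin_Ioc_eq_nhdsGT h]
        infer_instance
      intro i j
      refine ge_of_tendsto (tendsto_entry hc i j) ?_
      filter_upwards [self_mem_nhdsWithin] with r hr
      exact hgood_gt r hr.1 hr.2 i j
  have hmem : m ∈ E := by
    refine ⟨⟨hms, hmT⟩, ?_⟩
    intro r hr
    rcases eq_or_lt_of_le hr.1 with h | h
    · rw [← h]; exact hgoodm
    · exact hgood_gt r h hr.2
  have hms' : m = s := by
    by_contra hne'
    have hsm : s < m := lt_of_le_of_ne hms (Ne.symm hne')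
    set t' : ℝ := max s (m - δ) with ht'
    have ht'm : t' < m := max_lt hsm (by linarith)
    have ht'E : t' ∈ E := by
      refine ⟨⟨le_max_left _ _, le_trans ht'm.le hmT⟩, ?_⟩
      intro r hr
      rcases le_or_gt m r with h | h
      · exact hmem.2 r ⟨h, hr.2⟩
      · -- stepdown from m to r
        refine stepdown P h.le (hunit m hms) hgoodm ?_
        have h1 : m - r ≤ δ := by
          have : m - δ ≤ t' := le_max_right _ _
          have : m - δ ≤ r := this.trans hr.1
          linarith
        have h2 : ‖f m‖ ≤ C := hCb m ⟨hms, hmT⟩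
        calc (m - r) * ‖f m‖ ≤ δ * C := by
              apply mul_le_mul h1 h2 (norm_nonneg _) hδ0.le
          _ < 1 := hδC
    have := csInf_le hbdd ht'E
    rw [← hm] at this
    linarith
  have := hmem.2 s ⟨hms'.le, hsT⟩
  exact this

end Stmt15Aux

open Matrix in
open Stmt15Aux in
/-- A Hurwitz Metzler matrix admits a strictly positive vector
`v` with `Av ≪ 0`. -/
theorem stmt15 (n : ℕ) (A : Matrix (Fin n) (Fin n) ℝ)
    (hMetzler : ∀ i j, i ≠ j → 0 ≤ A i j)
    (hHurwitz : ∀ μ ∈ spectrum ℂ (A.map (Complex.ofReal)), μ.re < 0) :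
    ∃ v : Fin n → ℝ, (∀ i, 0 < v i) ∧ ∀ i, A.mulVec v i < 0 := by
  classical
  set s : ℝ := 1 + ∑ j, |A j j| with hs
  have hs0 : 0 < s := by
    have : 0 ≤ ∑ j, |A j j| := Finset.sum_nonneg fun j _ => abs_nonneg _
    rw [hs]; linarith
  set P : Matrix (Fin n) (Fin n) ℝ := A + s • (1 : Matrix (Fin n) (Fin n) ℝ) with hP
  have hPnn : ∀ i j, 0 ≤ P i j := by
    intro i j
    by_cases h : i = j
    · subst h
      have h1 : |A i i| ≤ ∑ j, |A j j| :=
        Finset.single_le_sum (f := fun j => |A j j|) (fun j _ => abs_nonneg _) (Finset.mem_univ i)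
      have h2 : -(A i i) ≤ |A i i| := neg_le_abs _
      rw [hP]
      simp only [Matrix.add_apply, Matrix.smul_apply, Matrix.one_apply_eq, smul_eq_mul, mul_one]
      rw [hs]; linarith
    · rw [hP]
      simp only [Matrix.add_apply, Matrix.smul_apply, Matrix.one_apply_ne h, smul_eq_mul,
        mul_zero, add_zero]
      exact hMetzler i j h
  have hunit : ∀ t : ℝ, s ≤ t → IsUnit (t • (1 : Matrix (Fin n) (Fin n) ℝ) - P) := by
    intro t ht
    have key : t • (1 : Matrix (Fin n) (Fin n) ℝ) - P
        = (t - s) • (1 : Matrix (Fin n) (Fin n) ℝ) - A := by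
      rw [hP, sub_smul]; abel
    by_contra h
    have hdet : ((t - s) • (1 : Matrix (Fin n) (Fin n) ℝ) - A).det = 0 := by
      rw [← key]
      by_contra hd
      exact h ((Matrix.isUnit_iff_isUnit_det _).mpr (isUnit_iff_ne_zero.mpr hd))
    have hmap : (((t - s) • (1 : Matrix (Fin n) (Fin n) ℝ) - A).map (Complex.ofRealHom))
        = ((t - s : ℝ) : ℂ) • (1 : Matrix (Fin n) (Fin n) ℂ) - A.map Complex.ofReal := by
      ext i j
      simp [Matrix.map_apply, Matrix.sub_apply, Matrix.smul_apply, Matrix.one_apply, apply_ite]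
    have hdetC : (((t - s : ℝ) : ℂ) • (1 : Matrix (Fin n) (Fin n) ℂ)
        - A.map Complex.ofReal).det = 0 := by
      rw [← hmap, show (((t - s) • (1 : Matrix (Fin n) (Fin n) ℝ) - A).map ⇑Complex.ofRealHom)
        = Complex.ofRealHom.mapMatrix ((t - s) • (1 : Matrix (Fin n) (Fin n) ℝ) - A) from rfl,
        ← RingHom.map_det, hdet, map_zero]
    have hmem : ((t - s : ℝ) : ℂ) ∈ spectrum ℂ (A.map Complex.ofReal) := by
      rw [spectrum.mem_iff]
      intro hu
      rw [Matrix.isUnit_iff_isUnit_det] at hu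
      rw [Algebra.algebraMap_eq_smul_one] at hu
      rw [hdetC] at hu
      exact (isUnit_iff_ne_zero.mp hu) rfl
    have := hHurwitz _ hmem
    rw [Complex.ofReal_re] at this
    linarith
  set N : Matrix (Fin n) (Fin n) ℝ :=
    Ring.inverse (s • (1 : Matrix (Fin n) (Fin n) ℝ) - P) with hN
  have hNnn : ∀ i j, 0 ≤ N i j := resolvent_nonneg P hPnn hs0 hunit
  have hu_s : IsUnit (s • (1 : Matrix (Fin n) (Fin n) ℝ) - P) := hunit s le_rfl
  have e3 : (s • (1 : Matrix (Fin n) (Fin n) ℝ) - P) * N = 1 := Ring.mul_inverse_cancel _ hu_s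
  have e4 : N * (s • (1 : Matrix (Fin n) (Fin n) ℝ) - P) = 1 := Ring.inverse_mul_cancel _ hu_s
  have e5 : s • N = 1 + N * P := by
    have : N * (s • (1 : Matrix (Fin n) (Fin n) ℝ)) - N * P = 1 := by
      rw [← mul_sub]; exact e4
    rw [Matrix.mul_smul, mul_one] at this
    linear_combination (norm := abel) this
  have hdiag : ∀ i, 0 < N i i := by
    intro i
    have h1 : (s • N) i i = (1 + N * P) i i := by rw [e5]
    rw [Matrix.smul_apply, Matrix.add_apply, Matrix.one_apply_eq, smul_eq_mul] at h1
    have h2 : 0 ≤ (N * P) i i := mul_nonneg' hNnn hPnn i i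
    nlinarith
  refine ⟨N.mulVec (fun _ => 1), ?_, ?_⟩
  · intro i
    have : N.mulVec (fun _ => 1) i = ∑ j, N i j := by
      simp [Matrix.mulVec, dotProduct]
    rw [this]
    have h1 : N i i ≤ ∑ j, N i j :=
      Finset.single_le_sum (f := fun j => N i j) (fun j _ => hNnn i j) (Finset.mem_univ i)
    exact lt_of_lt_of_le (hdiag i) h1
  · intro i
    have hAN : A * N = -1 := by
      have : A = -(s • (1 : Matrix (Fin n) (Fin n) ℝ) - P) := by rw [hP]; abel
      rw [this, neg_mul, e3]
    rw [Matrix.mulVec_mulVec, hAN]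
    simp [Matrix.neg_mulVec, Matrix.one_mulVec]
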